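/- Let X be a compact Hausdorff space equipped with an action of a countable discrete group G by homeomorphisms, and let μ be a Radon probability measure on X. Then μ is G-quasi-invariant if and only if for every g ∈ G and every pointwise decreasing sequence f_1 ≥ f_2 ≥ ⋯ of continuous functions f_n : X → [0,1], the implication holds: if inf_n ∫_X f_n dμ > 0 then inf_n ∫_X f_n(g⁻¹·x) dμ(x) > 0. -/

import Mathlib

open MeasureTheory Filter Topology Pointwise

private lemma smul_set_eq_preimage' {X G : Type*} [Group G] [MulAction G X] (g : G) (s : Set X) :
    g • s = (fun x => g⁻¹ • x) ⁻¹' s := by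
  rw [Set.preimage_smul, inv_inv]

/-- For a Radon probability measure `μ` on a compact Hausdorff space `X`
endowed with an action of a countable discrete group `G` by homeomorphisms, `μ` is
`G`-quasi-invariant if and only if for every `g ∈ G` and every pointwise decreasing sequence
of continuous functions `f n : X → [0,1]`, `0 < ⨅ n, ∫ f n dμ` implies
`0 < ⨅ n, ∫ f n (g⁻¹ • x) dμ(x)`. -/
theorem stmt0 {X : Type*} [TopologicalSpace X] [CompactSpace X] [T2Space X]
    [MeasurableSpace X] [BorelSpace X]
    {G : Type*} [Group G] [Countable G] [MulAction G X] [ContinuousConstSMul G X]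
    (μ : Measure X) [IsProbabilityMeasure μ] (hreg : μ.Regular) :
    (∀ (g : G) (E : Set X), MeasurableSet E → μ E = 0 → μ (g • E) = 0) ↔
      ∀ (g : G) (f : ℕ → X → ℝ),
        (∀ n, Continuous (f n)) →
        (∀ n x, f n x ∈ Set.Icc (0 : ℝ) 1) →
        (∀ n x, f (n + 1) x ≤ f n x) →
        (0 < ⨅ n, ∫ x, f n x ∂μ) →
        (0 < ⨅ n, ∫ x, f n (g⁻¹ • x) ∂μ) := by
  haveI := hreg
  have int_of_bdd : ∀ (u : X → ℝ), Measurable u → (∀ x, u x ∈ Set.Icc (0:ℝ) 1) →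
      Integrable u μ := by
    intro u hu hb
    refine (integrable_const (1:ℝ)).mono' hu.aestronglyMeasurable ?_
    filter_upwards with x
    rw [Real.norm_eq_abs, abs_of_nonneg (hb x).1]
    exact (hb x).2
  constructor
  · -- quasi-invariance implies the integral condition
    intro h g f hcont hicc hdec hpos
    set F : X → ℝ := fun x => ⨅ n, f n x with hFdef
    have hbdd : ∀ x, BddBelow (Set.range fun n => f n x) := fun x =>
      ⟨0, by rintro _ ⟨n, rfl⟩; exact (hicc n x).1⟩
    have hanti : ∀ x, Antitone fun n => f n x := fun x =>
      antitone_nat_of_succ_le fun n => hdec n x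
    have hFle : ∀ n x, F x ≤ f n x := fun n x => ciInf_le (hbdd x) n
    have hFicc : ∀ x, F x ∈ Set.Icc (0:ℝ) 1 := fun x =>
      ⟨le_ciInf fun n => (hicc n x).1, (hFle 0 x).trans (hicc 0 x).2⟩
    have hFtend : ∀ x, Tendsto (fun n => f n x) atTop (𝓝 (F x)) := fun x =>
      tendsto_atTop_ciInf (hanti x) (hbdd x)
    have hFmeas : Measurable F := Measurable.iInf fun n => (hcont n).measurable
    have hFint : Integrable F μ := int_of_bdd F hFmeas hFicc
    have hfint : ∀ n, Integrable (f n) μ := fun n =>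
      int_of_bdd (f n) (hcont n).measurable (hicc n)
    -- ∫ f n → ∫ F
    have htendI : Tendsto (fun n => ∫ x, f n x ∂μ) atTop (𝓝 (∫ x, F x ∂μ)) := by
      refine tendsto_integral_of_dominated_convergence (fun _ => (1:ℝ))
        (fun n => (hcont n).measurable.aestronglyMeasurable) (integrable_const 1)
        (fun n => ?_) ?_
      · filter_upwards with x
        rw [Real.norm_eq_abs, abs_of_nonneg (hicc n x).1]
        exact (hicc n x).2
      · filter_upwards with x using hFtend x
    have hIbdd : BddBelow (Set.range fun n => ∫ x, f n x ∂μ) :=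
      ⟨0, by rintro _ ⟨n, rfl⟩; exact integral_nonneg fun x => (hicc n x).1⟩
    have hFpos : 0 < ∫ x, F x ∂μ := by
      refine lt_of_lt_of_le hpos (ge_of_tendsto' htendI fun n => ciInf_le hIbdd n)
    -- support of F has positive measure
    have hsupp_meas : MeasurableSet (Function.support F) :=
      hFmeas (measurableSet_singleton 0).compl
    have hsupp_pos : 0 < μ (Function.support F) :=
      (integral_pos_iff_support_of_nonneg (fun x => (hFicc x).1) hFint).1 hFpos
    -- translated support has positive measure
    have hτcont : Continuous (fun x : X => g⁻¹ • x) := continuous_const_smul g⁻¹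
    have hGsupp_meas : MeasurableSet (g • Function.support F) := by
      rw [smul_set_eq_preimage']
      exact hτcont.measurable hsupp_meas
    have hGsupp_pos : μ (g • Function.support F) ≠ 0 := by
      intro h0
      have := h g⁻¹ _ hGsupp_meas h0
      rw [inv_smul_smul] at this
      exact hsupp_pos.ne' this
    -- the translated infimum function
    set Fg : X → ℝ := fun x => F (g⁻¹ • x) with hFgdef
    have hFgmeas : Measurable Fg := hFmeas.comp hτcont.measurable
    have hFgint : Integrable Fg μ := int_of_bdd Fg hFgmeas fun x => hFicc _
    have hFgsupp : Function.support Fg = g • Function.support F := by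
      rw [smul_set_eq_preimage']
      exact Function.support_comp_eq_preimage F _
    have hFgpos : 0 < ∫ x, Fg x ∂μ := by
      refine (integral_pos_iff_support_of_nonneg (fun x => (hFicc _).1) hFgint).2 ?_
      rw [hFgsupp]
      exact hGsupp_pos.bot_lt
    refine lt_of_lt_of_le hFgpos (le_ciInf fun n => ?_)
    refine integral_mono hFgint ?_ fun x => hFle n _
    exact int_of_bdd _ ((hcont n).comp hτcont).measurable fun x => hicc n _
  · -- the integral condition implies quasi-invariance
    intro h g E hE hE0
    have hEg_meas : MeasurableSet (g • E) := by
      rw [smul_set_eq_preimage']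
      exact (continuous_const_smul (g⁻¹ : G)).measurable hE
    by_contra hne
    obtain ⟨K, hKE, hKcomp, hKpos⟩ :=
      hEg_meas.exists_lt_isCompact (r := 0) (pos_iff_ne_zero.2 hne)
    -- K' = g⁻¹ • K is a null compact subset of E
    set K' : Set X := g⁻¹ • K with hK'def
    have hK'comp : IsCompact K' := hKcomp.smul g⁻¹
    have hK'E : K' ⊆ E := by
      have := Set.smul_set_mono (a := g⁻¹) hKE
      rwa [inv_smul_smul] at this
    have hK'0 : μ K' = 0 := le_antisymm (hE0 ▸ measure_mono hK'E) zero_le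
    -- open neighborhoods of K' with small measure
    have hV : ∀ n : ℕ, ∃ V : Set X, K' ⊆ V ∧ IsOpen V ∧
        μ V < ENNReal.ofReal (1 / (n + 1)) := by
      intro n
      obtain ⟨V, hV1, hV2, hV3⟩ := Set.exists_isOpen_lt_of_lt K'
        (ENNReal.ofReal (1 / (n + 1)))
        (by rw [hK'0]; exact ENNReal.ofReal_pos.2 (by positivity))
      exact ⟨V, hV1, hV2, hV3⟩
    choose V hVsub hVopen hVlt using hV
    -- Urysohn functions: 1 on K', 0 outside V n
    have hφ : ∀ n : ℕ, ∃ φ : C(X, ℝ), Set.EqOn φ 0 (V n)ᶜ ∧ Set.EqOn φ 1 K' ∧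
        ∀ x, φ x ∈ Set.Icc (0:ℝ) 1 := by
      intro n
      exact exists_continuous_zero_one_of_isCompact' hK'comp (hVopen n).isClosed_compl
        (Set.disjoint_compl_right_iff_subset.2 (hVsub n))
    choose φ hφ0 hφ1 hφicc using hφ
    -- decreasing minima
    let F : ℕ → X → ℝ := fun n => n.rec (φ 0) fun k Fk => fun x => min (Fk x) (φ (k+1) x)
    have hFsucc : ∀ n x, F (n+1) x = min (F n x) (φ (n+1) x) := fun n x => rfl
    have hFcont : ∀ n, Continuous (F n) := by
      intro n
      induction n with
      | zero => exact (φ 0).continuous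
      | succ k ih => exact ih.min (φ (k+1)).continuous
    have hFicc : ∀ n x, F n x ∈ Set.Icc (0:ℝ) 1 := by
      intro n
      induction n with
      | zero => exact hφicc 0
      | succ k ih =>
        intro x
        exact ⟨le_min ((ih x).1) ((hφicc (k+1) x).1), (min_le_left _ _).trans (ih x).2⟩
    have hFdec : ∀ n x, F (n+1) x ≤ F n x := fun n x => min_le_left _ _
    have hFleφ : ∀ n x, F n x ≤ φ n x := by
      intro n
      induction n with
      | zero => exact fun x => le_refl _
      | succ k _ => exact fun x => min_le_right _ _
    have hFone : ∀ n, ∀ x ∈ K', F n x = 1 := by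
      intro n
      induction n with
      | zero => exact fun x hx => hφ1 0 hx
      | succ k ih =>
        intro x hx
        rw [hFsucc, ih x hx, hφ1 (k+1) hx, Pi.one_apply, min_self]
    -- F n ≤ indicator of V n
    have hFint : ∀ n, Integrable (F n) μ := fun n =>
      int_of_bdd _ (hFcont n).measurable (hFicc n)
    have hFsmall : ∀ n, ∫ x, F n x ∂μ ≤ (μ (V n)).toReal := by
      intro n
      have : ∫ x, F n x ∂μ ≤ ∫ x, (V n).indicator (fun _ => (1:ℝ)) x ∂μ := by
        refine integral_mono (hFint n)
          ((integrable_const (1:ℝ)).indicator (hVopen n).measurableSet) fun x => ?_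
        by_cases hx : x ∈ V n
        · simp [Set.indicator_of_mem hx, (hFicc n x).2]
        · have : φ n x = 0 := hφ0 n hx
          simp [Set.indicator_of_notMem hx]
          exact (hFleφ n x).trans (le_of_eq this)
      rwa [integral_indicator_const (1:ℝ) (hVopen n).measurableSet, smul_eq_mul,
        mul_one] at this
    -- translated functions ψ n x = F n (g⁻¹ • x)
    set ψ : ℕ → X → ℝ := fun n x => F n (g⁻¹ • x) with hψdef
    have hτcont : Continuous (fun x : X => g⁻¹ • x) := continuous_const_smul g⁻¹
    have hψcont : ∀ n, Continuous (ψ n) := fun n => (hFcont n).comp hτcont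
    have hψicc : ∀ n x, ψ n x ∈ Set.Icc (0:ℝ) 1 := fun n x => hFicc n _
    have hψdec : ∀ n x, ψ (n+1) x ≤ ψ n x := fun n x => hFdec n _
    have hψint : ∀ n, Integrable (ψ n) μ := fun n =>
      int_of_bdd _ (hψcont n).measurable (hψicc n)
    -- ψ n = 1 on K, so ∫ ψ n ≥ μ K
    have hψbig : ∀ n, (μ K).toReal ≤ ∫ x, ψ n x ∂μ := by
      intro n
      have hKmeas := hKcomp.measurableSet
      have : ∫ x, K.indicator (fun _ => (1:ℝ)) x ∂μ ≤ ∫ x, ψ n x ∂μ := by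
        refine integral_mono ((integrable_const (1:ℝ)).indicator hKmeas) (hψint n)
          fun x => ?_
        by_cases hx : x ∈ K
        · have hx' : g⁻¹ • x ∈ K' := Set.smul_mem_smul_set hx
          simp [Set.indicator_of_mem hx, hψdef, hFone n _ hx']
        · simp [Set.indicator_of_notMem hx]
          exact (hψicc n x).1
      rwa [integral_indicator_const (1:ℝ) hKmeas, smul_eq_mul, mul_one] at this
    have hμKpos : 0 < (μ K).toReal :=
      ENNReal.toReal_pos hKpos.ne' (measure_ne_top μ K)
    have hψpos : 0 < ⨅ n, ∫ x, ψ n x ∂μ :=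
      lt_of_lt_of_le hμKpos (le_ciInf hψbig)
    -- apply the hypothesis with g⁻¹
    have hconc := h g⁻¹ ψ hψcont hψicc hψdec hψpos
    -- but the conclusion integrals are ∫ F n, which tend to 0
    have heq : ∀ n, (∫ x, ψ n ((g⁻¹)⁻¹ • x) ∂μ) = ∫ x, F n x ∂μ := by
      intro n
      congr 1
      funext x
      rw [hψdef]
      simp
    rw [show (fun n => ∫ x, ψ n ((g⁻¹)⁻¹ • x) ∂μ) = fun n => ∫ x, F n x ∂μ from
      funext heq] at hconc
    obtain ⟨n, hn⟩ := exists_nat_one_div_lt (K := ℝ) hconc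
    have h1 : (⨅ n, ∫ x, F n x ∂μ) ≤ ∫ x, F n x ∂μ :=
      ciInf_le ⟨0, by rintro _ ⟨m, rfl⟩; exact integral_nonneg fun x => (hFicc m x).1⟩ n
    have h2 : (μ (V n)).toReal < 1 / (n + 1) :=
      ENNReal.toReal_lt_of_lt_ofReal (hVlt n)
    linarith [hFsmall n]
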